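/- For every integer n ≥ 594, with t_n = ⌈(e^{1/e} - 1)·n + 1.05·ln n⌉, the inequality t_n ≥ (n+1)·(exp((1 + 8/n)/(e·(1 - e^{-√n}))) - 1) holds. -/

import Mathlib

lemma exp_le_one_div_aux (u : ℝ) (h : u < 1) : Real.exp u ≤ 1 / (1 - u) := by
  have h1 : 1 - u ≤ Real.exp (-u) := by
    have := Real.add_one_le_exp (-u); linarith
  have hp := Real.exp_pos u
  rw [le_div_iff₀ (by linarith : (0:ℝ) < 1 - u)]
  calc Real.exp u * (1 - u) ≤ Real.exp u * Real.exp (-u) :=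
        mul_le_mul_of_nonneg_left h1 hp.le
    _ = 1 := by rw [← Real.exp_add]; simp

set_option maxHeartbeats 1000000 in
/-- for `n ≥ 594` and `t_n = ⌈(e^{1/e}-1)·n + 1.05·ln n⌉`,
`t_n ≥ (n+1)·(exp((1 + 8/n)/(e·(1 - e^{-√n}))) - 1)`. -/
theorem stmt11 (n : ℕ) (hn : 594 ≤ n) :
    ((n : ℝ) + 1) *
        (Real.exp ((1 + 8 / (n : ℝ)) /
          (Real.exp 1 * (1 - Real.exp (-Real.sqrt (n : ℝ))))) - 1)
      ≤ (⌈(Real.exp (1 / Real.exp 1) - 1) * (n : ℝ) + 1.05 * Real.log (n : ℝ)⌉₊ : ℝ) := by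
  have hN : (594:ℝ) ≤ (n:ℝ) := by exact_mod_cast hn
  have hN0 : (0:ℝ) < (n:ℝ) := by linarith
  set N : ℝ := (n:ℝ) with hNdef
  have he1 : (2.718:ℝ) < Real.exp 1 := by
    have := Real.exp_one_gt_d9; norm_num at this ⊢; linarith
  have he2 : Real.exp 1 < 2.7183 := by
    have := Real.exp_one_lt_d9; norm_num at this ⊢; linarith
  have heP : (0:ℝ) < Real.exp 1 := Real.exp_pos 1
  -- bound on E := exp (1 / exp 1)
  set E := Real.exp (1 / Real.exp 1) with hEdef
  have hE1 : 1 ≤ E := Real.one_le_exp (by positivity)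
  have hE : E ≤ 1.5021 := by
    set u := 1 / (2 * Real.exp 1) with hu
    have hu0 : 0 < u := by positivity
    have hu1 : u ≤ 0.184 := by
      rw [hu, div_le_iff₀ (by positivity)]
      nlinarith
    have h2 : E = Real.exp u * Real.exp u := by
      rw [← Real.exp_add, hEdef]
      congr 1
      rw [hu]
      field_simp
      norm_num
    have h3 : Real.exp u ≤ 1.2256 := by
      have h5 := exp_le_one_div_aux u (by linarith)
      have h4 : 1 / (1 - u) ≤ 1.2256 := by
        rw [div_le_iff₀ (by linarith)]
        nlinarith
      linarith
    rw [h2]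
    nlinarith [Real.exp_pos u]
  -- epsilon bound
  set ε := Real.exp (-Real.sqrt N) with hεdef
  have hε0 : 0 < ε := Real.exp_pos _
  have hsnn : 0 ≤ Real.sqrt N := Real.sqrt_nonneg _
  have hexps : N ^ 2 / 256 ≤ Real.exp (Real.sqrt N) := by
    have h1 : Real.sqrt N / 4 ≤ Real.exp (Real.sqrt N / 4) := by
      have := Real.add_one_le_exp (Real.sqrt N / 4); linarith
    have h2 : (Real.sqrt N / 4) ^ 4 ≤ Real.exp (Real.sqrt N / 4) ^ 4 :=
      pow_le_pow_left₀ (by positivity) h1 4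
    have h3 : Real.exp (Real.sqrt N / 4) ^ 4 = Real.exp (Real.sqrt N) := by
      rw [← Real.exp_nat_mul]
      congr 1
      push_cast
      ring
    have hsq : Real.sqrt N ^ 2 = N := Real.sq_sqrt hN0.le
    have h4 : (Real.sqrt N / 4) ^ 4 = N ^ 2 / 256 := by
      have : Real.sqrt N ^ 4 = N ^ 2 := by
        rw [show (4:ℕ) = 2*2 from rfl, pow_mul, hsq]
      field_simp
      linarith [this]
    rw [h3] at h2
    rw [h4] at h2
    exact h2
  have hε : ε ≤ 256 / N ^ 2 := by
    have h5 : (0:ℝ) < N ^ 2 / 256 := by positivity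
    have h6 : ε = (Real.exp (Real.sqrt N))⁻¹ := by
      rw [hεdef, Real.exp_neg]
    rw [h6]
    rw [inv_le_comm₀ (Real.exp_pos _) (by positivity : (0:ℝ) < (256 / N^2 : ℝ))]
    calc (256 / N^2)⁻¹ = N^2/256 := by field_simp
      _ ≤ Real.exp (Real.sqrt N) := hexps
  have hεa : ε ≤ 1/1000 := by
    have : 256 / N^2 ≤ 1/1000 := by
      rw [div_le_div_iff₀ (by positivity) (by norm_num)]
      nlinarith
    linarith
  have hεb : ε * N ≤ 1/2 := by
    have h1 : ε * N ≤ (256 / N^2) * N := mul_le_mul_of_nonneg_right hε hN0.le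
    have h2 : (256 / N^2) * N = 256 / N := by field_simp
    have h3 : 256 / N ≤ 1/2 := by
      rw [div_le_div_iff₀ hN0 (by norm_num)]
      linarith
    linarith [h1, h2 ▸ h1]
  -- bound the exponent
  have hden : 0 < Real.exp 1 * (1 - ε) := mul_pos heP (by linarith)
  have hPε : Real.exp 1 * ε ≤ 0.0028 := by nlinarith
  have hx : (1 + 8/N) ≤ (1/Real.exp 1 + 3.3/N) * (Real.exp 1 * (1 - ε)) := by
    have h : (1/Real.exp 1 + 3.3/N) * (Real.exp 1 * (1 - ε)) * N
        = (1 - ε) * N + 3.3 * Real.exp 1 * (1 - ε) := by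
      field_simp
    have h2 : (1 + 8/N) * N = N + 8 := by field_simp
    have h3 : N + 8 ≤ (1 - ε) * N + 3.3 * Real.exp 1 * (1 - ε) := by
      nlinarith [hεb, hPε, he1, hε0.le]
    have h4 : (1 + 8/N) * N ≤ (1/Real.exp 1 + 3.3/N) * (Real.exp 1 * (1 - ε)) * N := by
      rw [h2, h]; exact h3
    exact le_of_mul_le_mul_right h4 hN0
  have hx2 : (1 + 8/N) / (Real.exp 1 * (1 - ε)) ≤ 1/Real.exp 1 + 3.3/N := by
    rw [div_le_iff₀ hden]; exact hx
  -- bound exp of the exponent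
  set q : ℝ := 3.3 / N with hqdef
  have hq0 : 0 < q := by positivity
  have hq : q ≤ 0.006 := by
    rw [hqdef, div_le_iff₀ hN0]; linarith
  have hqN : q * N = 3.3 := div_mul_cancel₀ _ hN0.ne'
  have hexpx : Real.exp ((1 + 8/N) / (Real.exp 1 * (1 - ε))) ≤ E * (1/(1 - q)) := by
    calc Real.exp ((1 + 8/N) / (Real.exp 1 * (1 - ε)))
        ≤ Real.exp (1/Real.exp 1 + 3.3/N) := Real.exp_le_exp.mpr hx2
      _ = E * Real.exp q := by rw [← Real.exp_add]
      _ ≤ E * (1/(1 - q)) := by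
          apply mul_le_mul_of_nonneg_left (exp_le_one_div_aux q (by linarith)) (by linarith)
  -- main numeric inequality
  have h9 : ((E-1)*N + 6)*(1-q) - (N+1)*(E - (1-q)) = 2.7 - 4.3*(E-1) - 7*q := by
    linear_combination (-(E:ℝ)) * hqN
  have h10 : (N+1)*(E*(1/(1-q)) - 1) ≤ (E-1)*N + 6 := by
    have hq1 : (0:ℝ) < 1 - q := by linarith
    rw [← mul_le_mul_iff_of_pos_right hq1]
    have heq : (N+1)*(E*(1/(1-q)) - 1)*(1-q) = (N+1)*(E - (1-q)) := by
      field_simp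
    rw [heq]
    nlinarith [h9, hE, hq]
  have hlog : (6:ℝ) ≤ Real.log N := by
    rw [Real.le_log_iff_exp_le hN0]
    have h1 : Real.exp 6 = Real.exp 1 ^ 6 := by
      rw [← Real.exp_nat_mul]; norm_num
    have h2 : Real.exp 1 ^ 6 ≤ (2.7183:ℝ) ^ 6 := pow_le_pow_left₀ heP.le he2.le 6
    have h3 : (2.7183:ℝ)^6 ≤ 594 := by norm_num
    linarith [h1 ▸ h2]
  calc (N + 1) * (Real.exp ((1 + 8/N) / (Real.exp 1 * (1 - ε))) - 1)
      ≤ (N + 1) * (E * (1/(1-q)) - 1) := by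
        apply mul_le_mul_of_nonneg_left (by linarith [hexpx]) (by linarith)
    _ ≤ (E - 1) * N + 6 := h10
    _ ≤ (E - 1) * N + 1.05 * Real.log N := by nlinarith [hlog, hE1]
    _ ≤ (⌈(E - 1) * N + 1.05 * Real.log N⌉₊ : ℝ) := Nat.le_ceil _
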